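/- The two-qubit rank-1 PVM given by the BB84 basis {|0⟩|0⟩, |0⟩|1⟩, |1⟩|+⟩, |1⟩|−⟩} can be localized by a two-qubit entangled resource state: there exist a pure state |R⟩⟩ on ℂ²⊗ℂ², rank-1 non-redundant POVMs {|A_a⟩⟩⟨⟨A_a|}, {|B_b⟩⟩⟨⟨B_b|}, and a function f, with A_a R* B_b ∝ M_{f(a,b)} for all a,b, where {Mᵢ} = {|0⟩⟨0|, |1⟩⟨0|, |+⟩⟨1|, |−⟩⟨1|}. -/

import Mathlib

open Matrix

noncomputable section

/-- The rank-1 operator `|M⟩⟩⟨⟨M|` on `ℂ² ⊗ ℂ²` associated with a `2×2` matrix `M`. -/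
def dop (M : Matrix (Fin 2) (Fin 2) ℂ) :
    Matrix (Fin 2 × Fin 2) (Fin 2 × Fin 2) ℂ :=
  Matrix.of fun p q => M p.1 p.2 * star (M q.1 q.2)

/-- The BB84 basis in double-ket form: `{Mᵢ} = {|0⟩⟨0|, |1⟩⟨0|, |+⟩⟨1|, |−⟩⟨1|}`,
so that `{|Mᵢ⟩⟩}` is the basis `{|0⟩|0⟩, |0⟩|1⟩, |1⟩|+⟩, |1⟩|−⟩}`. -/
def bb84 : Fin 4 → Matrix (Fin 2) (Fin 2) ℂ :=
  ![!![1, 0; 0, 0], !![0, 0; 1, 0],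
    (Real.sqrt 2 : ℂ)⁻¹ • !![0, 1; 0, 1],
    (Real.sqrt 2 : ℂ)⁻¹ • !![0, 1; 0, -1]]

local notation "c" => ((Real.sqrt 2 : ℂ))⁻¹

lemma star_c : star (c : ℂ) = c := by
  simp [Complex.star_def, ← Complex.ofReal_inv]

lemma c_mul_c : (c : ℂ) * c = 1/2 := by
  rw [← mul_inv, ← Complex.ofReal_mul, Real.mul_self_sqrt (by norm_num)]
  norm_num

lemma sq2 : (Real.sqrt 2 : ℂ)^2 = 2 := by
  rw [sq, ← Complex.ofReal_mul, Real.mul_self_sqrt (by norm_num)]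
  norm_num

lemma c3 : ((Real.sqrt 2 : ℂ)^3)⁻¹ = (c:ℂ) * (1/2) := by
  rw [pow_succ, sq2, mul_inv]
  ring

lemma c_ne : (c : ℂ) ≠ 0 := by
  simp [Real.sqrt_eq_zero']

lemma c_ne2 : (c : ℂ) ≠ -c := by
  simp [eq_neg_iff_add_eq_zero, ← two_mul, Real.sqrt_eq_zero']

lemma c_ne2' : -(c : ℂ) ≠ c := fun h => c_ne2 h.symm

set_option maxHeartbeats 2000000 in
set_option maxRecDepth 2000 in
/-- The two-qubit rank-1 PVM given by the BB84 basis can be localized by a two-qubit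
entangled resource state: there exist a pure entangled state `R` on `ℂ²⊗ℂ²`, rank-1
non-redundant POVMs `{|A_a⟩⟩⟨⟨A_a|}`, `{|B_b⟩⟩⟨⟨B_b|}`, and a pattern function `f`
with `A_a R* B_b ∝ M_{f(a,b)}` for all `a, b`. -/
theorem bb84_localizable :
    ∃ (nx ny : ℕ) (A : Fin nx → Matrix (Fin 2) (Fin 2) ℂ)
      (B : Fin ny → Matrix (Fin 2) (Fin 2) ℂ)
      (R : Matrix (Fin 2) (Fin 2) ℂ)
      (f : Fin nx → Fin ny → Fin 4),
        (Rᴴ * R).trace = 1 ∧ 1 < R.rank ∧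
        (∑ a, dop (A a)) = 1 ∧ (∑ b, dop (B b)) = 1 ∧
        (∀ a, A a ≠ 0) ∧ (∀ b, B b ≠ 0) ∧
        (∀ a a', (∃ α : ℂ, A a = α • A a') → a = a') ∧
        (∀ b b', (∃ α : ℂ, B b = α • B b') → b = b') ∧
        ∀ a b, ∃ α : ℂ, A a * R.map star * B b = α • bb84 (f a b) := by
  refine ⟨4, 4,
    ![ !![c,0;0,c], !![0,c;c,0], !![c,0;0,-c], !![0,-c;c,0]],
    bb84, (c : ℂ) • 1,
    ![![0,1,2,3],![1,0,2,3],![0,1,3,2],![1,0,3,2]], ?_, ?_, ?_, ?_, ?_, ?_, ?_, ?_, ?_⟩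
  · -- trace
    have h : ((c:ℂ) • (1 : Matrix (Fin 2) (Fin 2) ℂ))ᴴ * ((c:ℂ) • 1) = ((1:ℂ)/2) • 1 := by
      rw [Matrix.conjTranspose_smul, Matrix.conjTranspose_one, Matrix.smul_mul,
        Matrix.mul_smul, Matrix.one_mul, smul_smul, star_c, c_mul_c]
    rw [h, Matrix.trace_smul, Matrix.trace_one]
    norm_num
  · -- rank
    have h : IsUnit ((c:ℂ) • (1 : Matrix (Fin 2) (Fin 2) ℂ)) := by
      rw [Matrix.isUnit_iff_isUnit_det]
      have hd : ((c:ℂ) • (1 : Matrix (Fin 2) (Fin 2) ℂ)).det = (c:ℂ)^2 := by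
        rw [Matrix.det_smul, Matrix.det_one]
        norm_num
      rw [hd, isUnit_iff_ne_zero]
      exact pow_ne_zero 2 c_ne
    rw [Matrix.rank_of_isUnit _ h]
    simp
  · -- sum A
    ext ⟨i,j⟩ ⟨k,l⟩
    simp only [Fin.sum_univ_four, dop, Matrix.add_apply, Matrix.of_apply, Matrix.one_apply]
    fin_cases i <;> fin_cases j <;> fin_cases k <;> fin_cases l <;>
      norm_num [star_c, c_mul_c, Prod.ext_iff, Matrix.cons_val_two, Matrix.cons_val_three, Matrix.tail_cons, Matrix.head_cons]
  · -- sum B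
    ext ⟨i,j⟩ ⟨k,l⟩
    simp only [Fin.sum_univ_four, dop, Matrix.add_apply, Matrix.of_apply, Matrix.one_apply, bb84]
    fin_cases i <;> fin_cases j <;> fin_cases k <;> fin_cases l <;>
      (try norm_num [star_c, c_mul_c, Prod.ext_iff, Matrix.cons_val_two, Matrix.cons_val_three, Matrix.tail_cons, Matrix.head_cons]) <;>
      (try ring_nf) <;> (try norm_num [c_mul_c, sq2])
  · -- A nonzero
    intro a h
    fin_cases a <;>
      first
      | exact c_ne (by simpa using congrFun (congrFun h 0) 0)
      | exact c_ne (by simpa using congrFun (congrFun h 0) 1)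
      | exact c_ne (by simpa using congrFun (congrFun h 1) 0)
  · -- B nonzero
    intro b h
    fin_cases b <;>
      first
      | exact one_ne_zero (α := ℂ) (by simpa [bb84] using congrFun (congrFun h 0) 0)
      | exact one_ne_zero (α := ℂ) (by simpa [bb84] using congrFun (congrFun h 1) 0)
      | exact c_ne (by simpa [bb84] using congrFun (congrFun h 0) 1)
  · -- A non-redundant
    intro a a' h
    obtain ⟨α, h⟩ := h
    have h00 := congrFun (congrFun h 0) 0
    have h01 := congrFun (congrFun h 0) 1
    have h10 := congrFun (congrFun h 1) 0
    have h11 := congrFun (congrFun h 1) 1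
    clear h
    fin_cases a <;> fin_cases a' <;>
      (try simp [c_ne] at h00 h01 h10 h11 ⊢) <;>
      first
      | rfl
      | (exfalso; rw [← h00] at h11; simp [c_ne] at h11)
      | (exfalso; rw [← h01] at h10; simp [c_ne] at h10)
      | (exfalso; rw [← h10] at h01; simp [c_ne] at h01)
      | (exfalso; rw [← h11] at h00; simp [c_ne] at h00)
      | (exfalso; simp_all [c_ne, c_ne2, c_ne2'])
  · -- B non-redundant
    intro b b' h
    obtain ⟨α, h⟩ := h
    have h00 := congrFun (congrFun h 0) 0
    have h01 := congrFun (congrFun h 0) 1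
    have h10 := congrFun (congrFun h 1) 0
    have h11 := congrFun (congrFun h 1) 1
    clear h
    fin_cases b <;> fin_cases b' <;>
      (try simp [bb84, c_ne] at h00 h01 h10 h11 ⊢) <;>
      first
      | rfl
      | (exfalso; rw [← h00] at h11; simp [c_ne] at h11)
      | (exfalso; rw [← h01] at h10; simp [c_ne] at h10)
      | (exfalso; rw [← h10] at h01; simp [c_ne] at h01)
      | (exfalso; rw [← h11] at h00; simp [c_ne] at h00)
      | (exfalso; rw [← h01] at h11; simp [c_ne] at h11)
      | (exfalso; rw [← h11] at h01; simp [c_ne] at h01)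
      | (exfalso; simp_all [c_ne, c_ne2, c_ne2'])
  · -- products
    intro a b
    have hR : (((c:ℂ) • (1 : Matrix (Fin 2) (Fin 2) ℂ)).map star) = (c:ℂ) • 1 := by
      ext i j; fin_cases i <;> fin_cases j <;> simp [Matrix.one_apply, star_c]
    rw [hR]
    fin_cases a <;> fin_cases b
    · refine ⟨((1:ℂ)/2), ?_⟩
      show _ = ((1:ℂ)/2) • bb84 0
      ext i j; fin_cases i <;> fin_cases j <;> (try simp [bb84, Matrix.mul_apply, Matrix.one_apply, Fin.sum_univ_two]) <;> (try ring_nf) <;> (try norm_num [sq2, c3])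
    · refine ⟨((1:ℂ)/2), ?_⟩
      show _ = ((1:ℂ)/2) • bb84 1
      ext i j; fin_cases i <;> fin_cases j <;> (try simp [bb84, Matrix.mul_apply, Matrix.one_apply, Fin.sum_univ_two]) <;> (try ring_nf) <;> (try norm_num [sq2, c3])
    · refine ⟨((1:ℂ)/2), ?_⟩
      show _ = ((1:ℂ)/2) • bb84 2
      ext i j; fin_cases i <;> fin_cases j <;> (try simp [bb84, Matrix.mul_apply, Matrix.one_apply, Fin.sum_univ_two]) <;> (try ring_nf) <;> (try norm_num [sq2, c3])
    · refine ⟨((1:ℂ)/2), ?_⟩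
      show _ = ((1:ℂ)/2) • bb84 3
      ext i j; fin_cases i <;> fin_cases j <;> (try simp [bb84, Matrix.mul_apply, Matrix.one_apply, Fin.sum_univ_two]) <;> (try ring_nf) <;> (try norm_num [sq2, c3])
    · refine ⟨((1:ℂ)/2), ?_⟩
      show _ = ((1:ℂ)/2) • bb84 1
      ext i j; fin_cases i <;> fin_cases j <;> (try simp [bb84, Matrix.mul_apply, Matrix.one_apply, Fin.sum_univ_two]) <;> (try ring_nf) <;> (try norm_num [sq2, c3])
    · refine ⟨((1:ℂ)/2), ?_⟩
      show _ = ((1:ℂ)/2) • bb84 0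
      ext i j; fin_cases i <;> fin_cases j <;> (try simp [bb84, Matrix.mul_apply, Matrix.one_apply, Fin.sum_univ_two]) <;> (try ring_nf) <;> (try norm_num [sq2, c3])
    · refine ⟨((1:ℂ)/2), ?_⟩
      show _ = ((1:ℂ)/2) • bb84 2
      ext i j; fin_cases i <;> fin_cases j <;> (try simp [bb84, Matrix.mul_apply, Matrix.one_apply, Fin.sum_univ_two]) <;> (try ring_nf) <;> (try norm_num [sq2, c3])
    · refine ⟨-((1:ℂ)/2), ?_⟩
      show _ = -((1:ℂ)/2) • bb84 3
      ext i j; fin_cases i <;> fin_cases j <;> (try simp [bb84, Matrix.mul_apply, Matrix.one_apply, Fin.sum_univ_two]) <;> (try ring_nf) <;> (try norm_num [sq2, c3])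
    · refine ⟨((1:ℂ)/2), ?_⟩
      show _ = ((1:ℂ)/2) • bb84 0
      ext i j; fin_cases i <;> fin_cases j <;> (try simp [bb84, Matrix.mul_apply, Matrix.one_apply, Fin.sum_univ_two]) <;> (try ring_nf) <;> (try norm_num [sq2, c3])
    · refine ⟨-((1:ℂ)/2), ?_⟩
      show _ = -((1:ℂ)/2) • bb84 1
      ext i j; fin_cases i <;> fin_cases j <;> (try simp [bb84, Matrix.mul_apply, Matrix.one_apply, Fin.sum_univ_two]) <;> (try ring_nf) <;> (try norm_num [sq2, c3])
    · refine ⟨((1:ℂ)/2), ?_⟩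
      show _ = ((1:ℂ)/2) • bb84 3
      ext i j; fin_cases i <;> fin_cases j <;> (try simp [bb84, Matrix.mul_apply, Matrix.one_apply, Fin.sum_univ_two]) <;> (try ring_nf) <;> (try norm_num [sq2, c3])
    · refine ⟨((1:ℂ)/2), ?_⟩
      show _ = ((1:ℂ)/2) • bb84 2
      ext i j; fin_cases i <;> fin_cases j <;> (try simp [bb84, Matrix.mul_apply, Matrix.one_apply, Fin.sum_univ_two]) <;> (try ring_nf) <;> (try norm_num [sq2, c3])
    · refine ⟨((1:ℂ)/2), ?_⟩
      show _ = ((1:ℂ)/2) • bb84 1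
      ext i j; fin_cases i <;> fin_cases j <;> (try simp [bb84, Matrix.mul_apply, Matrix.one_apply, Fin.sum_univ_two]) <;> (try ring_nf) <;> (try norm_num [sq2, c3])
    · refine ⟨-((1:ℂ)/2), ?_⟩
      show _ = -((1:ℂ)/2) • bb84 0
      ext i j; fin_cases i <;> fin_cases j <;> (try simp [bb84, Matrix.mul_apply, Matrix.one_apply, Fin.sum_univ_two]) <;> (try ring_nf) <;> (try norm_num [sq2, c3])
    · refine ⟨-((1:ℂ)/2), ?_⟩
      show _ = -((1:ℂ)/2) • bb84 3
      ext i j; fin_cases i <;> fin_cases j <;> (try simp [bb84, Matrix.mul_apply, Matrix.one_apply, Fin.sum_univ_two]) <;> (try ring_nf) <;> (try norm_num [sq2, c3])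
    · refine ⟨((1:ℂ)/2), ?_⟩
      show _ = ((1:ℂ)/2) • bb84 2
      ext i j; fin_cases i <;> fin_cases j <;> (try simp [bb84, Matrix.mul_apply, Matrix.one_apply, Fin.sum_univ_two]) <;> (try ring_nf) <;> (try norm_num [sq2, c3])
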